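/- Let O be a discrete valuation ring with uniformizer π, residue field k of characteristic ≠ 2, and let R = O[V₁, T₂, v, t, z]/(vt − π, zv·q(T₂) − 2π, z(z·q(T₂) − 2t)) where V₁ is a tuple of free variables, T₂ = (t₁,…,t_m) and q(T₂) = T₂^t H T₂ = Σ t_i t_{m+1−i} for H the unit anti-diagonal matrix. Then the flat closure of Spec R over O (i.e. Spec R modulo its π-power torsion ideal) equals Spec O[V₁, T₂, v, z]/(zv·q(T₂) − 2π), where t is eliminated via the relation 2t = z·q(T₂) (valid after inverting structure considerations on the flat locus). -/

import Mathlib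

/- STATEMENT 5: Flat closure of the affine chart (Case 1) of the naive
splitting model.  Over a DVR O with uniformizer π and 2 a unit, the flat
closure (quotient by π-power torsion) of
  R = O[V₁, T₂, v, t, z]/(v·t - π, z·v·q(T₂) - 2π, z·(z·q(T₂) - 2t))
is  O[V₁, T₂, v, z]/(z·v·q(T₂) - 2π),  where q(T₂) = Σ tᵢ t_{m+1-i}. -/

open MvPolynomial

section Aux
lemma aux_eval_unit {O : Type} [CommRing O] [IsDomain O] {a m : ℕ} [NeZero m]
    (h2 : IsUnit (2 : O))
    (q' : MvPolynomial ((Fin a ⊕ Fin m) ⊕ Fin 2) O)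
    (hq' : q' = ∑ i : Fin m, X (Sum.inl (Sum.inr i)) * X (Sum.inl (Sum.inr i.rev))) :
    IsUnit (eval (Sum.elim (Sum.elim (fun _ => (0:O))
      (fun i => if i = 0 ∨ i = Fin.rev 0 then 1 else 0)) (fun _ => 1)) q') := by
  set w : ((Fin a ⊕ Fin m) ⊕ Fin 2) → O := Sum.elim (Sum.elim (fun _ => (0:O))
      (fun i => if i = 0 ∨ i = Fin.rev 0 then 1 else 0)) (fun _ => 1) with hw
  rw [hq', map_sum]
  have hterm : ∀ i : Fin m,
      eval w ((X (Sum.inl (Sum.inr i)) * X (Sum.inl (Sum.inr i.rev)) :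
        MvPolynomial ((Fin a ⊕ Fin m) ⊕ Fin 2) O))
      = if i = 0 ∨ i = Fin.rev 0 then 1 else 0 := by
    intro i
    have hiff : (i.rev = 0 ∨ i.rev = Fin.rev 0) ↔ (i = 0 ∨ i = Fin.rev 0) := by
      constructor
      · rintro (h | h)
        · right; rw [← Fin.rev_rev i, h]
        · left; exact Fin.rev_inj.mp h
      · rintro (h | h)
        · right; rw [h]
        · left; rw [h, Fin.rev_rev]
    simp only [eval_mul, eval_X, hw, Sum.elim_inl, Sum.elim_inr]
    rw [if_congr hiff rfl rfl]
    split_ifs <;> ring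
  rw [Finset.sum_congr rfl (fun i _ => hterm i)]
  have hfilter : (Finset.univ.filter fun i : Fin m => i = 0 ∨ i = Fin.rev 0)
      = {0, Fin.rev 0} := by ext i; simp
  rw [Finset.sum_ite, Finset.sum_const_zero, add_zero, Finset.sum_const, hfilter,
    nsmul_eq_mul, mul_one]
  by_cases h0 : (0 : Fin m) = Fin.rev 0
  · rw [← h0]; simp
  · rw [Finset.card_insert_of_notMem (by simpa using h0), Finset.card_singleton]
    exact_mod_cast h2

lemma aux_regular {O : Type} [CommRing O] [IsDomain O] [IsDiscreteValuationRing O]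
    {π : O} (hπ : Irreducible π) (h2 : IsUnit (2 : O)) {a m : ℕ} [NeZero m]
    (q' : MvPolynomial ((Fin a ⊕ Fin m) ⊕ Fin 2) O)
    (hq' : q' = ∑ i : Fin m, X (Sum.inl (Sum.inr i)) * X (Sum.inl (Sum.inr i.rev)))
    (x : MvPolynomial ((Fin a ⊕ Fin m) ⊕ Fin 2) O)
    (hx : C π * x ∈ Ideal.span {X (Sum.inr 1) * X (Sum.inr 0) * q' - C (2*π)}) :
    x ∈ Ideal.span {X (Sum.inr 1) * X (Sum.inr 0) * q' - C (2*π)} := by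
  set g : MvPolynomial ((Fin a ⊕ Fin m) ⊕ Fin 2) O :=
    X (Sum.inr 1) * X (Sum.inr 0) * q' - C (2*π) with hg
  obtain ⟨h, hh⟩ := Ideal.mem_span_singleton'.mp hx   -- h * g = C π * x
  set red : O →+* O ⧸ Ideal.span {π} := Ideal.Quotient.mk _ with hred
  have hredπ : red π = 0 := by
    rw [hred, Ideal.Quotient.eq_zero_iff_mem]; exact Ideal.mem_span_singleton_self π
  haveI : (Ideal.span {π}).IsMaximal := PrincipalIdealRing.isMaximal_of_irreducible hπ
  haveI : IsDomain (O ⧸ Ideal.span {π}) := Ideal.Quotient.isDomain _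
  have hgne : map red g ≠ 0 := by
    intro hzero
    set w : ((Fin a ⊕ Fin m) ⊕ Fin 2) → O := Sum.elim (Sum.elim (fun _ => (0:O))
      (fun i => if i = 0 ∨ i = Fin.rev 0 then 1 else 0)) (fun _ => 1) with hw
    have heval : red (eval w g) = 0 := by
      have : red (eval w g) = eval (fun s => red (w s)) (map red g) := by
        rw [eval_map]
        rw [show eval w g = eval₂ (RingHom.id O) w g from by rw [eval₂_eq_eval_map]; simp]
        rw [MvPolynomial.eval₂_comp_left red (RingHom.id O) w g]
        rfl
      rw [this, hzero, map_zero]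
    have hevalg : eval w g = eval w q' - 2 * π := by
      rw [hg]; simp [hw]
    have hunit : IsUnit (red (eval w g)) := by
      rw [hevalg, map_sub, map_mul, hredπ, mul_zero, sub_zero]
      exact (aux_eval_unit h2 q' hq').map red
    rw [heval] at hunit
    exact not_isUnit_zero hunit
  have hmaph : map red h = 0 := by
    have h0 : map red h * map red g = 0 := by
      have := congrArg (map red) hh
      rw [map_mul, map_mul] at this
      rw [this]
      simp [hredπ]
    rcases mul_eq_zero.mp h0 with h1 | h1
    · exact h1
    · exact absurd h1 hgne
  have hker : h ∈ RingHom.ker (map red : MvPolynomial _ O →+* _) := hmaph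
  rw [MvPolynomial.ker_map] at hker
  have hkr : RingHom.ker red = Ideal.span {π} := Ideal.mk_ker
  rw [hkr, Ideal.map_span, Set.image_singleton] at hker
  obtain ⟨h', hh'⟩ := Ideal.mem_span_singleton'.mp hker   -- h' * C π = h
  have hπC : (C π : MvPolynomial ((Fin a ⊕ Fin m) ⊕ Fin 2) O) ≠ 0 := by
    simpa using hπ.ne_zero
  have hcancel : x = h' * g := by
    have : C π * x = C π * (h' * g) := by rw [← hh, ← hh']; ring
    exact mul_left_cancel₀ hπC this
  exact Ideal.mem_span_singleton'.mpr ⟨h', hcancel.symm⟩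
end Aux

/-- The ideal of elements killed by a power of `p`. -/
def powerTorsion {R : Type*} [CommRing R] (p : R) : Ideal R where
  carrier := {x | ∃ n : ℕ, p ^ n * x = 0}
  zero_mem' := ⟨0, by simp⟩
  add_mem' := by
    rintro a b ⟨n, ha⟩ ⟨m, hb⟩
    refine ⟨n + m, ?_⟩
    have h : p ^ (n + m) * (a + b) = p ^ m * (p ^ n * a) + p ^ n * (p ^ m * b) := by
      ring
    rw [h, ha, hb, mul_zero, mul_zero, add_zero]
  smul_mem' := by
    rintro c x ⟨n, hx⟩
    refine ⟨n, ?_⟩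
    have h : p ^ n * (c • x) = c * (p ^ n * x) := by
      simp [smul_eq_mul]; ring
    rw [h, hx, mul_zero]

set_option maxHeartbeats 2000000 in
theorem flat_closure_case1_chart
    (O : Type) [CommRing O] [IsDomain O] [IsDiscreteValuationRing O]
    (π : O) (hπ : Irreducible π) (h2 : IsUnit (2 : O))
    (a m : ℕ) (hm : 1 ≤ m)
    -- variables: V₁ = inl (inl i), T₂ = inl (inr i), v = inr 0, t = inr 1, z = inr 2
    (q : MvPolynomial ((Fin a ⊕ Fin m) ⊕ Fin 3) O)
    (hq : q = ∑ i : Fin m, X (Sum.inl (Sum.inr i)) * X (Sum.inl (Sum.inr i.rev)))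
    (I : Ideal (MvPolynomial ((Fin a ⊕ Fin m) ⊕ Fin 3) O))
    (hI : I = Ideal.span
      { X (Sum.inr 0) * X (Sum.inr 1) - C π,
        X (Sum.inr 2) * X (Sum.inr 0) * q - C (2 * π),
        X (Sum.inr 2) * (X (Sum.inr 2) * q - 2 * X (Sum.inr 1)) })
    -- the target ring O[V₁, T₂, v, z]/(z·v·q - 2π)
    (q' : MvPolynomial ((Fin a ⊕ Fin m) ⊕ Fin 2) O)
    (hq' : q' = ∑ i : Fin m, X (Sum.inl (Sum.inr i)) * X (Sum.inl (Sum.inr i.rev)))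
    (I' : Ideal (MvPolynomial ((Fin a ⊕ Fin m) ⊕ Fin 2) O))
    (hI' : I' = Ideal.span
      { X (Sum.inr 1) * X (Sum.inr 0) * q' - C (2 * π) }) :
    Nonempty
      (((MvPolynomial ((Fin a ⊕ Fin m) ⊕ Fin 3) O ⧸ I) ⧸
          powerTorsion (algebraMap O (MvPolynomial ((Fin a ⊕ Fin m) ⊕ Fin 3) O ⧸ I) π)) ≃+*
        (MvPolynomial ((Fin a ⊕ Fin m) ⊕ Fin 2) O ⧸ I')) := by
  classical
  haveI : NeZero m := ⟨by omega⟩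
  obtain ⟨c, hc⟩ := h2.exists_right_inv     -- 2 * c = 1
  -- numeral facts
  have hc2' : (2 : MvPolynomial ((Fin a ⊕ Fin m) ⊕ Fin 2) O) * C c = 1 := by
    rw [← map_ofNat (C : O →+* MvPolynomial ((Fin a ⊕ Fin m) ⊕ Fin 2) O) 2, ← map_mul, hc,
      map_one]
  have hc2'' : (2 : MvPolynomial ((Fin a ⊕ Fin m) ⊕ Fin 3) O) * C c = 1 := by
    rw [← map_ofNat (C : O →+* MvPolynomial ((Fin a ⊕ Fin m) ⊕ Fin 3) O) 2, ← map_mul, hc,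
      map_one]
  have hCπ2 : (C (2*π) : MvPolynomial ((Fin a ⊕ Fin m) ⊕ Fin 2) O) = 2 * C π := by
    rw [map_mul, map_ofNat]
  have hCπ2' : (C (2*π) : MvPolynomial ((Fin a ⊕ Fin m) ⊕ Fin 3) O) = 2 * C π := by
    rw [map_mul, map_ofNat]
  -- the forward substitution F
  set F : MvPolynomial ((Fin a ⊕ Fin m) ⊕ Fin 3) O →+* MvPolynomial ((Fin a ⊕ Fin m) ⊕ Fin 2) O :=
    eval₂Hom C (Sum.elim (fun s => X (Sum.inl s))
      ![X (Sum.inr 0), C c * X (Sum.inr 1) * q', X (Sum.inr 1)]) with hF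
  have hF0 : F (X (Sum.inr 0)) = X (Sum.inr 0) := by simp [hF]
  have hF1 : F (X (Sum.inr 1)) = C c * X (Sum.inr 1) * q' := by simp [hF]
  have hF2 : F (X (Sum.inr 2)) = X (Sum.inr 1) := by simp [hF]
  have hFl : ∀ s, F (X (Sum.inl s)) = X (Sum.inl s) := by intro s; simp [hF]
  have hFC : ∀ r : O, F (C r) = C r := by intro r; simp [hF]
  have hFq : F q = q' := by
    rw [hq, hq', map_sum]
    refine Finset.sum_congr rfl fun i _ => ?_
    rw [map_mul, hFl, hFl]

  -- F maps I into I'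
  have hFmem : ∀ p ∈ I, F p ∈ I' := by
    have hle : I ≤ I'.comap F := by
      rw [hI, Ideal.span_le]
      rintro x hx
      simp only [Set.mem_insert_iff, Set.mem_singleton_iff] at hx
      rw [SetLike.mem_coe, Ideal.mem_comap]
      rcases hx with rfl | rfl | rfl
      · rw [map_sub, map_mul, hF0, hF1, hFC, hI']
        refine Ideal.mem_span_singleton'.mpr ⟨C c, ?_⟩
        rw [hCπ2]
        linear_combination (-(C π : MvPolynomial ((Fin a ⊕ Fin m) ⊕ Fin 2) O)) * hc2'
      · rw [map_sub, map_mul, map_mul, hF2, hF0, hFq, hFC, hI']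
        exact Ideal.subset_span rfl
      · have h0 : F (X (Sum.inr 2) * (X (Sum.inr 2) * q - 2 * X (Sum.inr 1))) = 0 := by
          rw [map_mul, map_sub, map_mul, map_mul, hF2, hF1, hFq, map_ofNat]
          linear_combination (-(X (Sum.inr 1) * X (Sum.inr 1) * q' :
            MvPolynomial ((Fin a ⊕ Fin m) ⊕ Fin 2) O)) * hc2'
        rw [h0]; exact Ideal.zero_mem _
    exact fun p hp => hle hp
  -- induced map on the quotient
  set fbar : (MvPolynomial ((Fin a ⊕ Fin m) ⊕ Fin 3) O ⧸ I) →+*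
      (MvPolynomial ((Fin a ⊕ Fin m) ⊕ Fin 2) O ⧸ I') :=
    Ideal.Quotient.lift I ((Ideal.Quotient.mk I').comp F)
      (fun p hp => by
        rw [RingHom.comp_apply, Ideal.Quotient.eq_zero_iff_mem]
        exact hFmem p hp) with hfbar
  have hfbar_mk : ∀ p, fbar (Ideal.Quotient.mk I p) = Ideal.Quotient.mk I' (F p) := by
    intro p; rw [hfbar, Ideal.Quotient.lift_mk]; rfl
  -- π is regular in the target
  have reg1 : ∀ y : MvPolynomial ((Fin a ⊕ Fin m) ⊕ Fin 2) O ⧸ I',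
      Ideal.Quotient.mk I' (C π) * y = 0 → y = 0 := by
    intro y hy
    obtain ⟨ypre, rfl⟩ := Ideal.Quotient.mk_surjective y
    rw [← map_mul, Ideal.Quotient.eq_zero_iff_mem] at hy
    rw [Ideal.Quotient.eq_zero_iff_mem]
    rw [hI'] at hy ⊢
    exact aux_regular hπ h2 q' hq' ypre hy
  have regn : ∀ (n : ℕ) (y : MvPolynomial ((Fin a ⊕ Fin m) ⊕ Fin 2) O ⧸ I'),
      (Ideal.Quotient.mk I' (C π)) ^ n * y = 0 → y = 0 := by
    intro n
    induction n with
    | zero => intro y hy; simpa using hy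
    | succ n ih =>
      intro y hy
      refine ih _ (reg1 _ ?_)
      rw [← hy]; ring
  -- the torsion ideal
  set T := powerTorsion (algebraMap O (MvPolynomial ((Fin a ⊕ Fin m) ⊕ Fin 3) O ⧸ I) π) with hT
  have hπA : algebraMap O (MvPolynomial ((Fin a ⊕ Fin m) ⊕ Fin 3) O ⧸ I) π
      = Ideal.Quotient.mk I (C π) := rfl
  -- fbar kills T
  have hfT : ∀ x ∈ T, fbar x = 0 := by
    intro x hx
    obtain ⟨n, hn⟩ := hx
    refine regn n (fbar x) ?_
    have : (Ideal.Quotient.mk I' (C π)) ^ n * fbar x = fbar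
        ((algebraMap O (MvPolynomial ((Fin a ⊕ Fin m) ⊕ Fin 3) O ⧸ I) π) ^ n * x) := by
      rw [map_mul, map_pow, hπA, hfbar_mk, hFC]
    rw [this, hn, map_zero]
  set φ : ((MvPolynomial ((Fin a ⊕ Fin m) ⊕ Fin 3) O ⧸ I) ⧸ T) →+*
      (MvPolynomial ((Fin a ⊕ Fin m) ⊕ Fin 2) O ⧸ I') :=
    Ideal.Quotient.lift T fbar hfT with hφ
  -- reverse map G
  set G : MvPolynomial ((Fin a ⊕ Fin m) ⊕ Fin 2) O →+* MvPolynomial ((Fin a ⊕ Fin m) ⊕ Fin 3) O :=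
    eval₂Hom C (Sum.elim (fun s => X (Sum.inl s)) ![X (Sum.inr 0), X (Sum.inr 2)]) with hG
  have hG0 : G (X (Sum.inr 0)) = X (Sum.inr 0) := by simp [hG]
  have hG1 : G (X (Sum.inr 1)) = X (Sum.inr 2) := by simp [hG]
  have hGl : ∀ s, G (X (Sum.inl s)) = X (Sum.inl s) := by intro s; simp [hG]
  have hGC : ∀ r : O, G (C r) = C r := by intro r; simp [hG]
  have hGq' : G q' = q := by
    rw [hq, hq', map_sum]
    refine Finset.sum_congr rfl fun i _ => ?_
    rw [map_mul, hGl, hGl]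
  have hGF1 : G (C c * X (Sum.inr 1) * q') = C c * X (Sum.inr 2) * q := by
    rw [map_mul, map_mul, hGC, hG1, hGq']
  set ψ0 : MvPolynomial ((Fin a ⊕ Fin m) ⊕ Fin 2) O →+*
      ((MvPolynomial ((Fin a ⊕ Fin m) ⊕ Fin 3) O ⧸ I) ⧸ T) :=
    (Ideal.Quotient.mk T).comp ((Ideal.Quotient.mk I).comp G) with hψ0
  have hGmem : ∀ p ∈ I', ψ0 p = 0 := by
    intro p hp
    rw [hI'] at hp
    obtain ⟨u, hu⟩ := Ideal.mem_span_singleton'.mp hp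
    rw [← hu, map_mul]
    have : ψ0 (X (Sum.inr 1) * X (Sum.inr 0) * q' - C (2*π)) = 0 := by
      have hGg : G (X (Sum.inr 1) * X (Sum.inr 0) * q' - C (2*π))
          = X (Sum.inr 2) * X (Sum.inr 0) * q - C (2*π) := by
        rw [map_sub, map_mul, map_mul, hG1, hG0, hGq', hGC]
      rw [hψ0, RingHom.comp_apply, RingHom.comp_apply, hGg]
      have : (X (Sum.inr 2) * X (Sum.inr 0) * q - C (2*π) :
          MvPolynomial ((Fin a ⊕ Fin m) ⊕ Fin 3) O) ∈ I := by
        rw [hI]; exact Ideal.subset_span (by right; left; rfl)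
      rw [Ideal.Quotient.eq_zero_iff_mem.mpr this, map_zero]
    rw [this, mul_zero]
  set ψ : (MvPolynomial ((Fin a ⊕ Fin m) ⊕ Fin 2) O ⧸ I') →+*
      ((MvPolynomial ((Fin a ⊕ Fin m) ⊕ Fin 3) O ⧸ I) ⧸ T) :=
    Ideal.Quotient.lift I' ψ0 hGmem with hψ
  have hψ_mk : ∀ p, ψ (Ideal.Quotient.mk I' p)
      = Ideal.Quotient.mk T (Ideal.Quotient.mk I (G p)) := by
    intro p; rw [hψ, Ideal.Quotient.lift_mk]; rfl
  have hφ_mk : ∀ p, φ (Ideal.Quotient.mk T (Ideal.Quotient.mk I p))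
      = Ideal.Quotient.mk I' (F p) := by
    intro p; rw [hφ, Ideal.Quotient.lift_mk]; exact hfbar_mk p
  -- composite identities
  have hcomp1 : φ.comp ψ = RingHom.id _ := by
    refine Ideal.Quotient.ringHom_ext ?_
    refine MvPolynomial.ringHom_ext ?_ ?_
    · intro r
      simp only [RingHom.comp_apply, RingHom.id_apply]
      rw [hψ_mk, hGC, hφ_mk, hFC]
    · rintro (s | i)
      · simp only [RingHom.comp_apply, RingHom.id_apply]
        rw [hψ_mk, hGl, hφ_mk, hFl]
      · fin_cases i
        · simp only [RingHom.comp_apply, RingHom.id_apply, Fin.zero_eta]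
          rw [hψ_mk, hG0, hφ_mk, hF0]
        · simp only [RingHom.comp_apply, RingHom.id_apply, Fin.mk_one]
          rw [hψ_mk, hG1, hφ_mk, hF2]
  have hcomp2 : ψ.comp φ = RingHom.id _ := by
    refine Ideal.Quotient.ringHom_ext ?_
    refine Ideal.Quotient.ringHom_ext ?_
    refine MvPolynomial.ringHom_ext ?_ ?_
    · intro r
      simp only [RingHom.comp_apply, RingHom.id_apply]
      rw [hφ_mk, hFC, hψ_mk, hGC]
    · rintro (s | i)
      · simp only [RingHom.comp_apply, RingHom.id_apply]
        rw [hφ_mk, hFl, hψ_mk, hGl]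
      · fin_cases i
        · simp only [RingHom.comp_apply, RingHom.id_apply, Fin.zero_eta]
          rw [hφ_mk, hF0, hψ_mk, hG0]
        · -- the t variable: needs the torsion relation
          simp only [RingHom.comp_apply, RingHom.id_apply, Fin.mk_one]
          rw [hφ_mk, hF1, hψ_mk, hGF1]
          -- goal: mk T (mk I (C c * X (inr 2) * q)) = mk T (mk I (X (inr 1)))
          rw [Ideal.Quotient.eq, ← map_sub]
          refine ⟨1, ?_⟩
          rw [pow_one, hπA, ← map_mul]
          rw [Ideal.Quotient.eq_zero_iff_mem]
          have key : C π * (C c * X (Sum.inr 2) * q - X (Sum.inr 1)) =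
              C c * X (Sum.inr 1) * (X (Sum.inr 2) * X (Sum.inr 0) * q - C (2*π))
              - C c * (X (Sum.inr 2) * q) * (X (Sum.inr 0) * X (Sum.inr 1) - C π) := by
            rw [hCπ2']
            linear_combination (C π * X (Sum.inr 1) :
              MvPolynomial ((Fin a ⊕ Fin m) ⊕ Fin 3) O) * hc2''
          have m1 : (X (Sum.inr 0) * X (Sum.inr 1) - C π :
              MvPolynomial ((Fin a ⊕ Fin m) ⊕ Fin 3) O) ∈ I := by
            rw [hI]; exact Ideal.subset_span (by left; rfl)
          have m2 : (X (Sum.inr 2) * X (Sum.inr 0) * q - C (2*π) :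
              MvPolynomial ((Fin a ⊕ Fin m) ⊕ Fin 3) O) ∈ I := by
            rw [hI]; exact Ideal.subset_span (by right; left; rfl)
          rw [key]
          exact Ideal.sub_mem _ (Ideal.mul_mem_left _ _ m2) (Ideal.mul_mem_left _ _ m1)
        · simp only [RingHom.comp_apply, RingHom.id_apply,
            show (⟨2, by omega⟩ : Fin 3) = 2 from rfl]
          rw [hφ_mk, hF2, hψ_mk, hG1]
  exact ⟨RingEquiv.ofRingHom φ ψ hcomp1 hcomp2⟩
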